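/- Let E be a finite-dimensional real inner product space and let f, f̃, h : E → ℝ be differentiable with L-Lipschitz gradients, satisfying ‖∇f(y) − ∇h(y)‖² ≤ σ_g² and ‖∇f̃(y) − ∇h(y)‖² ≤ σ_g² for all y ∈ E. On a probability space with a sub-σ-algebra 𝓕, let x, x̃ be 𝓕-measurable square-integrable E-valued random vectors and let g, g̃ be square-integrable E-valued random vectors with E[g | 𝓕] = ∇f(x), E[g̃ | 𝓕] = ∇f̃(x̃), second moments E[‖g − ∇f(x)‖²] ≤ σ_l², E[‖g̃ − ∇f̃(x̃)‖²] ≤ σ_l², uncorrelated noises E[⟨g − ∇f(x), g̃ − ∇f̃(x̃)⟩] = 0, and suppose the exchangeability cancellation E[⟨x − x̃, ∇f(x) − ∇f̃(x̃)⟩] = E[⟨x − x̃, ∇f(x) − ∇f(x̃)⟩] holds. Then for every stepsize η > 0, E[‖(x − ηg) − (x̃ − ηg̃)‖²] ≤ (1 + 2ηL + 6η²L²) E[‖x − x̃‖²] + 4η²(σ_l² + 3σ_g²). -/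

import Mathlib

open MeasureTheory ProbabilityTheory


section Aux

variable {E : Type*} [NormedAddCommGroup E] [InnerProductSpace ℝ E] [FiniteDimensional ℝ E]
variable {Ω : Type*} {𝓕 : MeasurableSpace Ω} [m : MeasurableSpace Ω] {μ : Measure Ω}
variable [IsProbabilityMeasure μ]

lemma aux_integrable_inner {u v : Ω → E} (hu : MemLp u 2 μ) (hv : MemLp v 2 μ) :
    Integrable (fun ω => (inner ℝ (u ω) (v ω) : ℝ)) μ := by
  have h := L2.integrable_inner (𝕜 := ℝ) (hu.toLp u) (hv.toLp v)
  refine h.congr ?_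
  filter_upwards [hu.coeFn_toLp, hv.coeFn_toLp] with ω h1 h2
  rw [h1, h2]

lemma aux_condexp_const_inner (h𝓕 : 𝓕 ≤ m) {Z : Ω → E} (hZ : Integrable Z μ) (c : E) :
    μ[fun ω => (inner ℝ c (Z ω) : ℝ)|𝓕] =ᵐ[μ] fun ω => (inner ℝ c ((μ[Z|𝓕]) ω) : ℝ) := by
  refine (ae_eq_condExp_of_forall_setIntegral_eq h𝓕 (hZ.const_inner c) ?_ ?_ ?_).symm
  · intro s _ _
    exact (integrable_condExp.const_inner c).integrableOn
  · intro s hs hμs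
    rw [integral_inner integrable_condExp.integrableOn c, integral_inner hZ.integrableOn c,
      setIntegral_condExp h𝓕 hZ hs]
  · exact StronglyMeasurable.aestronglyMeasurable (stronglyMeasurable_const.inner stronglyMeasurable_condExp)

lemma aux_integral_inner_eq_zero (h𝓕 : 𝓕 ≤ m)
    {D Z : Ω → E} (hDm : StronglyMeasurable[𝓕] D) (hD : MemLp D 2 μ) (hZ : MemLp Z 2 μ)
    (hcond : μ[Z|𝓕] =ᵐ[μ] 0) :
    ∫ ω, (inner ℝ (D ω) (Z ω) : ℝ) ∂μ = 0 := by
  have hZi : Integrable Z μ := hZ.integrable one_le_two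
  set b := stdOrthonormalBasis ℝ E with hb
  have hpt : ∀ ω, (inner ℝ (D ω) (Z ω) : ℝ) =
      ∑ i, (inner ℝ (D ω) (b i) : ℝ) * (inner ℝ (b i) (Z ω) : ℝ) := fun ω =>
    (b.sum_inner_mul_inner (D ω) (Z ω)).symm
  have hDi : ∀ i, MemLp (fun ω => (inner ℝ (D ω) (b i) : ℝ)) 2 μ := fun i => hD.inner_const (b i)
  have hZi2 : ∀ i, MemLp (fun ω => (inner ℝ (b i) (Z ω) : ℝ)) 2 μ := fun i => hZ.const_inner (b i)
  have hint : ∀ i : Fin (Module.finrank ℝ E), Integrable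
      (fun ω => (inner ℝ (D ω) (b i) : ℝ) * (inner ℝ (b i) (Z ω) : ℝ)) μ := by
    intro i
    have := aux_integrable_inner (hDi i) (hZi2 i)
    simpa [RCLike.inner_apply, mul_comm] using this
  calc ∫ ω, (inner ℝ (D ω) (Z ω) : ℝ) ∂μ
      = ∫ ω, ∑ i, (inner ℝ (D ω) (b i) : ℝ) * (inner ℝ (b i) (Z ω) : ℝ) ∂μ := by
        exact integral_congr_ae (Filter.Eventually.of_forall hpt)
    _ = ∑ i, ∫ ω, (inner ℝ (D ω) (b i) : ℝ) * (inner ℝ (b i) (Z ω) : ℝ) ∂μ :=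
        integral_finset_sum _ (fun i _ => hint i)
    _ = 0 := by
        refine Finset.sum_eq_zero (fun i _ => ?_)
        have hDmi : StronglyMeasurable[𝓕] (fun ω => (inner ℝ (D ω) (b i) : ℝ)) :=
          hDm.inner stronglyMeasurable_const
        have hZcond : μ[(fun ω => (inner ℝ (b i) (Z ω) : ℝ))|𝓕] =ᵐ[μ] 0 := by
          refine (aux_condexp_const_inner h𝓕 hZi (b i)).trans ?_
          filter_upwards [hcond] with ω h
          simp [h]
        have hpull : μ[(fun ω => (inner ℝ (D ω) (b i) : ℝ)) * (fun ω => (inner ℝ (b i) (Z ω) : ℝ))|𝓕]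
            =ᵐ[μ] (fun ω => (inner ℝ (D ω) (b i) : ℝ)) * μ[(fun ω => (inner ℝ (b i) (Z ω) : ℝ))|𝓕] :=
          condExp_mul_of_stronglyMeasurable_left hDmi (hint i) ((hZi2 i).integrable one_le_two)
        have hz : ∫ ω, (μ[(fun ω => (inner ℝ (D ω) (b i) : ℝ)) * (fun ω => (inner ℝ (b i) (Z ω) : ℝ))|𝓕]) ω ∂μ = 0 := by
          rw [integral_congr_ae (g := fun _ => (0:ℝ))]
          · simp
          · filter_upwards [hpull, hZcond] with ω h1 h2
            rw [h1]
            simp [Pi.mul_apply, h2]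
        have hic := integral_condExp (μ := μ)
          (f := (fun ω => (inner ℝ (D ω) (b i) : ℝ)) * (fun ω => (inner ℝ (b i) (Z ω) : ℝ))) h𝓕
        calc ∫ ω, (inner ℝ (D ω) (b i) : ℝ) * (inner ℝ (b i) (Z ω) : ℝ) ∂μ
            = ∫ ω, ((fun ω => (inner ℝ (D ω) (b i) : ℝ)) * (fun ω => (inner ℝ (b i) (Z ω) : ℝ))) ω ∂μ := rfl
          _ = 0 := by rw [← hic]; exact hz

end Aux

section Aux2

variable {E : Type*} [NormedAddCommGroup E] [InnerProductSpace ℝ E] [FiniteDimensional ℝ E]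
variable {Ω : Type*} {𝓕 : MeasurableSpace Ω} [m : MeasurableSpace Ω] {μ : Measure Ω}
variable [IsProbabilityMeasure μ]

lemma aux_integral_inner_condexp (h𝓕 : 𝓕 ≤ m)
    {D Z W : Ω → E} (hDm : StronglyMeasurable[𝓕] D) (hD : MemLp D 2 μ)
    (hZ : MemLp Z 2 μ) (hW : MemLp W 2 μ) (hWm : StronglyMeasurable[𝓕] W)
    (hcond : μ[Z|𝓕] =ᵐ[μ] W) :
    ∫ ω, (inner ℝ (D ω) (Z ω) : ℝ) ∂μ = ∫ ω, (inner ℝ (D ω) (W ω) : ℝ) ∂μ := by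
  have hZi : Integrable Z μ := hZ.integrable one_le_two
  have hWi : Integrable W μ := hW.integrable one_le_two
  have hWc : μ[W|𝓕] = W := condExp_of_stronglyMeasurable h𝓕 hWm hWi
  have hzero : μ[Z - W|𝓕] =ᵐ[μ] 0 := by
    refine (condExp_sub hZi hWi 𝓕).trans ?_
    filter_upwards [hcond] with ω h
    simp [hWc, Pi.sub_apply, h]
  have h0 := aux_integral_inner_eq_zero h𝓕 hDm hD (hZ.sub hW) hzero
  have hsplit : ∫ ω, (inner ℝ (D ω) ((Z - W) ω) : ℝ) ∂μ
      = ∫ ω, (inner ℝ (D ω) (Z ω) : ℝ) ∂μ - ∫ ω, (inner ℝ (D ω) (W ω) : ℝ) ∂μ := by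
    rw [← integral_sub (aux_integrable_inner hD hZ) (aux_integrable_inner hD hW)]
    refine integral_congr_ae (Filter.Eventually.of_forall fun ω => ?_)
    simp [inner_sub_right]
  rw [hsplit] at h0
  linarith

lemma aux_integral_norm_sub_sq {u v : Ω → E} (hu : MemLp u 2 μ) (hv : MemLp v 2 μ) :
    ∫ ω, ‖u ω - v ω‖ ^ 2 ∂μ = ∫ ω, ‖u ω‖ ^ 2 ∂μ - 2 * ∫ ω, (inner ℝ (u ω) (v ω) : ℝ) ∂μ
      + ∫ ω, ‖v ω‖ ^ 2 ∂μ := by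
  have h1 : Integrable (fun ω => ‖u ω‖ ^ 2) μ := hu.norm.integrable_sq
  have h2 : Integrable (fun ω => ‖v ω‖ ^ 2) μ := hv.norm.integrable_sq
  have h3 := aux_integrable_inner hu hv
  have he : ∀ ω, ‖u ω - v ω‖ ^ 2 = ‖u ω‖ ^ 2 - 2 * (inner ℝ (u ω) (v ω) : ℝ) + ‖v ω‖ ^ 2 :=
    fun ω => norm_sub_sq_real _ _
  have h4 : Integrable (fun ω => 2 * (inner ℝ (u ω) (v ω) : ℝ)) μ := h3.const_mul 2
  have h5 : Integrable (fun ω => ‖u ω‖ ^ 2 - 2 * (inner ℝ (u ω) (v ω) : ℝ)) μ := h1.sub h4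
  simp_rw [he]
  rw [integral_add h5 h2, integral_sub h1 h4, integral_const_mul]

lemma aux_integral_norm_add_sq {u v : Ω → E} (hu : MemLp u 2 μ) (hv : MemLp v 2 μ) :
    ∫ ω, ‖u ω + v ω‖ ^ 2 ∂μ = ∫ ω, ‖u ω‖ ^ 2 ∂μ + 2 * ∫ ω, (inner ℝ (u ω) (v ω) : ℝ) ∂μ
      + ∫ ω, ‖v ω‖ ^ 2 ∂μ := by
  have h1 : Integrable (fun ω => ‖u ω‖ ^ 2) μ := hu.norm.integrable_sq
  have h2 : Integrable (fun ω => ‖v ω‖ ^ 2) μ := hv.norm.integrable_sq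
  have h3 := aux_integrable_inner hu hv
  have he : ∀ ω, ‖u ω + v ω‖ ^ 2 = ‖u ω‖ ^ 2 + 2 * (inner ℝ (u ω) (v ω) : ℝ) + ‖v ω‖ ^ 2 :=
    fun ω => norm_add_sq_real _ _
  have h4 : Integrable (fun ω => 2 * (inner ℝ (u ω) (v ω) : ℝ)) μ := h3.const_mul 2
  have h5 : Integrable (fun ω => ‖u ω‖ ^ 2 + 2 * (inner ℝ (u ω) (v ω) : ℝ)) μ := h1.add h4
  simp_rw [he]
  rw [integral_add h5 h2, integral_add h1 h4, integral_const_mul]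

lemma aux_memℒp_lipschitz_comp {L : ℝ} (hL : 0 ≤ L) {φ : E → E}
    (hφ : LipschitzWith (Real.toNNReal L) φ) {u : Ω → E} (hu : MemLp u 2 μ) :
    MemLp (fun ω => φ (u ω)) 2 μ := by
  have hψ : LipschitzWith (Real.toNNReal L) (fun y => φ y - φ 0) := by
    apply LipschitzWith.of_dist_le_mul
    intro a b
    simpa [dist_eq_norm, sub_sub_sub_cancel_right] using hφ.dist_le_mul a b
  have h1 : MemLp ((fun y => φ y - φ 0) ∘ u) 2 μ := hψ.comp_memLp (by simp) hu
  have h2 := h1.add (memLp_const (μ := μ) (φ 0))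
  have he : ((fun y => φ y - φ 0) ∘ u) + (fun _ => φ 0) = fun ω => φ (u ω) := by
    funext ω; simp [Function.comp]
  rwa [he] at h2

end Aux2

set_option maxHeartbeats 1000000 in
theorem sgd_aux
    {E : Type*} [NormedAddCommGroup E] [InnerProductSpace ℝ E] [FiniteDimensional ℝ E]
    {Ω : Type*} (𝓕 : MeasurableSpace Ω) [m : MeasurableSpace Ω] (μ : Measure Ω)
    [IsProbabilityMeasure μ] (h𝓕 : 𝓕 ≤ m)
    (f ft h : E → ℝ) (L σl σg : ℝ) (hL : 0 < L)
    (hsf : ∀ x y, ‖gradient f x - gradient f y‖ ≤ L * ‖x - y‖)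
    (hsft : ∀ x y, ‖gradient ft x - gradient ft y‖ ≤ L * ‖x - y‖)
    (hsh : ∀ x y, ‖gradient h x - gradient h y‖ ≤ L * ‖x - y‖)
    (hfh : ∀ y, ‖gradient f y - gradient h y‖ ^ 2 ≤ σg ^ 2)
    (hfth : ∀ y, ‖gradient ft y - gradient h y‖ ^ 2 ≤ σg ^ 2)
    (x xt g gt : Ω → E)
    (hx : StronglyMeasurable[𝓕] x) (hxt : StronglyMeasurable[𝓕] xt)
    (hxL2 : MemLp x 2 μ) (hxtL2 : MemLp xt 2 μ)
    (hgL2 : MemLp g 2 μ) (hgtL2 : MemLp gt 2 μ)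
    (hg_unbiased : μ[g|𝓕] =ᵐ[μ] fun ω => gradient f (x ω))
    (hgt_unbiased : μ[gt|𝓕] =ᵐ[μ] fun ω => gradient ft (xt ω))
    (hg_var : ∫ ω, ‖g ω - gradient f (x ω)‖ ^ 2 ∂μ ≤ σl ^ 2)
    (hgt_var : ∫ ω, ‖gt ω - gradient ft (xt ω)‖ ^ 2 ∂μ ≤ σl ^ 2)
    (huncorr : ∫ ω, (inner ℝ (g ω - gradient f (x ω)) (gt ω - gradient ft (xt ω)) : ℝ) ∂μ = 0)
    (hexch : ∫ ω, (inner ℝ (x ω - xt ω) (gradient f (x ω) - gradient ft (xt ω)) : ℝ) ∂μ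
        = ∫ ω, (inner ℝ (x ω - xt ω) (gradient f (x ω) - gradient f (xt ω)) : ℝ) ∂μ)
    (η : ℝ) (hη : 0 < η) :
    ∫ ω, ‖(x ω - η • g ω) - (xt ω - η • gt ω)‖ ^ 2 ∂μ ≤
      (1 + 2 * η * L + 6 * η ^ 2 * L ^ 2) * ∫ ω, ‖x ω - xt ω‖ ^ 2 ∂μ
        + 4 * η ^ 2 * (σl ^ 2 + 3 * σg ^ 2) := by
  -- Lipschitz gradients
  have mkLip : ∀ (φ : E → ℝ), (∀ a b, ‖gradient φ a - gradient φ b‖ ≤ L * ‖a - b‖) →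
      LipschitzWith (Real.toNNReal L) (gradient φ) := by
    intro φ hφ
    apply LipschitzWith.of_dist_le_mul
    intro a b
    simpa [dist_eq_norm, Real.coe_toNNReal L hL.le] using hφ a b
  have hlf := mkLip f hsf
  have hlft := mkLip ft hsft
  -- square integrability & measurability of gradient compositions
  have hφx2 : MemLp (fun ω => gradient f (x ω)) 2 μ := aux_memℒp_lipschitz_comp hL.le hlf hxL2
  have hφxt2 : MemLp (fun ω => gradient f (xt ω)) 2 μ := aux_memℒp_lipschitz_comp hL.le hlf hxtL2
  have hφtxt2 : MemLp (fun ω => gradient ft (xt ω)) 2 μ :=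
    aux_memℒp_lipschitz_comp hL.le hlft hxtL2
  have hφxm : StronglyMeasurable[𝓕] (fun ω => gradient f (x ω)) :=
    hlf.continuous.comp_stronglyMeasurable hx
  have hφtxtm : StronglyMeasurable[𝓕] (fun ω => gradient ft (xt ω)) :=
    hlft.continuous.comp_stronglyMeasurable hxt
  -- basic combinations
  have hD2 : MemLp (fun ω => x ω - xt ω) 2 μ := hxL2.sub hxtL2
  have hDm : StronglyMeasurable[𝓕] (fun ω => x ω - xt ω) := hx.sub hxt
  have hG2 : MemLp (fun ω => g ω - gt ω) 2 μ := hgL2.sub hgtL2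
  have hGr2 : MemLp (fun ω => gradient f (x ω) - gradient ft (xt ω)) 2 μ := hφx2.sub hφtxt2
  have hGrm : StronglyMeasurable[𝓕] (fun ω => gradient f (x ω) - gradient ft (xt ω)) :=
    hφxm.sub hφtxtm
  have hN2 : MemLp (fun ω => (g ω - gt ω) - (gradient f (x ω) - gradient ft (xt ω))) 2 μ :=
    hG2.sub hGr2
  have hn12 : MemLp (fun ω => g ω - gradient f (x ω)) 2 μ := hgL2.sub hφx2
  have hn22 : MemLp (fun ω => gt ω - gradient ft (xt ω)) 2 μ := hgtL2.sub hφtxt2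
  -- conditional expectation of the gradient difference
  have hcondG : μ[(fun ω => g ω - gt ω)|𝓕]
      =ᵐ[μ] fun ω => gradient f (x ω) - gradient ft (xt ω) := by
    have h1 : μ[g - gt|𝓕] =ᵐ[μ] μ[g|𝓕] - μ[gt|𝓕] :=
      condExp_sub (hgL2.integrable one_le_two) (hgtL2.integrable one_le_two) 𝓕
    refine h1.trans ?_
    filter_upwards [hg_unbiased, hgt_unbiased] with ω e1 e2
    simp [Pi.sub_apply, e1, e2]
  have hcondN : μ[(fun ω => (g ω - gt ω) - (gradient f (x ω) - gradient ft (xt ω)))|𝓕]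
      =ᵐ[μ] 0 := by
    have h1 : μ[(fun ω => g ω - gt ω) - (fun ω => gradient f (x ω) - gradient ft (xt ω))|𝓕]
        =ᵐ[μ] μ[(fun ω => g ω - gt ω)|𝓕] - μ[(fun ω => gradient f (x ω) - gradient ft (xt ω))|𝓕] :=
      condExp_sub (hG2.integrable one_le_two) (hGr2.integrable one_le_two) 𝓕
    have h2 : μ[(fun ω => gradient f (x ω) - gradient ft (xt ω))|𝓕]
        = fun ω => gradient f (x ω) - gradient ft (xt ω) :=
      condExp_of_stronglyMeasurable h𝓕 hGrm (hGr2.integrable one_le_two)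
    refine h1.trans ?_
    filter_upwards [hcondG] with ω e1
    simp [Pi.sub_apply, h2, e1]
  -- Step A : the cross term
  have hA : ∫ ω, (inner ℝ (x ω - xt ω) (g ω - gt ω) : ℝ) ∂μ
      = ∫ ω, (inner ℝ (x ω - xt ω) (gradient f (x ω) - gradient f (xt ω)) : ℝ) ∂μ := by
    rw [← hexch]
    exact aux_integral_inner_condexp h𝓕 hDm hD2 hG2 hGr2 hGrm hcondG
  have hAlow : -(L * ∫ ω, ‖x ω - xt ω‖ ^ 2 ∂μ)
      ≤ ∫ ω, (inner ℝ (x ω - xt ω) (gradient f (x ω) - gradient f (xt ω)) : ℝ) ∂μ := by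
    have hptw : ∀ ω, -(L * ‖x ω - xt ω‖ ^ 2)
        ≤ (inner ℝ (x ω - xt ω) (gradient f (x ω) - gradient f (xt ω)) : ℝ) := by
      intro ω
      have h1 := abs_real_inner_le_norm (x ω - xt ω) (gradient f (x ω) - gradient f (xt ω))
      have h2 := hsf (x ω) (xt ω)
      have h3 := norm_nonneg (x ω - xt ω)
      have h4 := mul_le_mul_of_nonneg_left h2 h3
      have h5 := neg_abs_le (inner ℝ (x ω - xt ω) (gradient f (x ω) - gradient f (xt ω)) : ℝ)
      nlinarith
    have hint1 : Integrable (fun ω => -(L * ‖x ω - xt ω‖ ^ 2)) μ :=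
      (hD2.norm.integrable_sq.const_mul L).neg
    have hint2 : Integrable
        (fun ω => (inner ℝ (x ω - xt ω) (gradient f (x ω) - gradient f (xt ω)) : ℝ)) μ :=
      aux_integrable_inner hD2 (hφx2.sub hφxt2)
    have := integral_mono hint1 hint2 hptw
    rwa [integral_neg, integral_const_mul] at this
  -- Step B : second moment of the gradient difference
  have hsplitG : ∫ ω, ‖g ω - gt ω‖ ^ 2 ∂μ
      = ∫ ω, ‖gradient f (x ω) - gradient ft (xt ω)‖ ^ 2 ∂μ
        + 2 * ∫ ω, (inner ℝ (gradient f (x ω) - gradient ft (xt ω))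
            ((g ω - gt ω) - (gradient f (x ω) - gradient ft (xt ω))) : ℝ) ∂μ
        + ∫ ω, ‖(g ω - gt ω) - (gradient f (x ω) - gradient ft (xt ω))‖ ^ 2 ∂μ := by
    have he := aux_integral_norm_add_sq (μ := μ) hGr2 hN2
    have hfe : (fun ω => ‖(gradient f (x ω) - gradient ft (xt ω))
        + ((g ω - gt ω) - (gradient f (x ω) - gradient ft (xt ω)))‖ ^ 2)
        = fun ω => ‖g ω - gt ω‖ ^ 2 := by
      funext ω; congr 1; abel_nf
    rw [← hfe]
    exact he
  have hcross0 : ∫ ω, (inner ℝ (gradient f (x ω) - gradient ft (xt ω))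
      ((g ω - gt ω) - (gradient f (x ω) - gradient ft (xt ω))) : ℝ) ∂μ = 0 :=
    aux_integral_inner_eq_zero h𝓕 hGrm hGr2 hN2 hcondN
  -- noise second moment
  have hNbound : ∫ ω, ‖(g ω - gt ω) - (gradient f (x ω) - gradient ft (xt ω))‖ ^ 2 ∂μ
      ≤ 2 * σl ^ 2 := by
    have hfe : (fun ω => ‖(g ω - gt ω) - (gradient f (x ω) - gradient ft (xt ω))‖ ^ 2)
        = fun ω => ‖(g ω - gradient f (x ω)) - (gt ω - gradient ft (xt ω))‖ ^ 2 := by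
      funext ω; congr 1; abel_nf
    rw [hfe, aux_integral_norm_sub_sq hn12 hn22, huncorr]
    linarith
  -- deterministic gradient difference bound
  have hGrBound : ∫ ω, ‖gradient f (x ω) - gradient ft (xt ω)‖ ^ 2 ∂μ
      ≤ 3 * L ^ 2 * ∫ ω, ‖x ω - xt ω‖ ^ 2 ∂μ + 6 * σg ^ 2 := by
    have hptw : ∀ ω, ‖gradient f (x ω) - gradient ft (xt ω)‖ ^ 2
        ≤ 3 * L ^ 2 * ‖x ω - xt ω‖ ^ 2 + 6 * σg ^ 2 := by
      intro ω
      have he : gradient f (x ω) - gradient ft (xt ω)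
          = (gradient f (x ω) - gradient h (x ω)) + (gradient h (x ω) - gradient h (xt ω))
            + (gradient h (xt ω) - gradient ft (xt ω)) := by abel
      rw [he]
      have t1 := norm_add_le ((gradient f (x ω) - gradient h (x ω))
        + (gradient h (x ω) - gradient h (xt ω))) (gradient h (xt ω) - gradient ft (xt ω))
      have t2 := norm_add_le (gradient f (x ω) - gradient h (x ω))
        (gradient h (x ω) - gradient h (xt ω))
      have b1 := hfh (x ω)
      have b2 := hsh (x ω) (xt ω)
      have b3 : ‖gradient h (xt ω) - gradient ft (xt ω)‖ ^ 2 ≤ σg ^ 2 := by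
        rw [norm_sub_rev]; exact hfth (xt ω)
      have n1 := norm_nonneg (gradient f (x ω) - gradient h (x ω))
      have n2 := norm_nonneg (gradient h (x ω) - gradient h (xt ω))
      have n3 := norm_nonneg (gradient h (xt ω) - gradient ft (xt ω))
      have n4 := norm_nonneg ((gradient f (x ω) - gradient h (x ω))
        + (gradient h (x ω) - gradient h (xt ω)))
      have n5 := norm_nonneg ((gradient f (x ω) - gradient h (x ω))
        + (gradient h (x ω) - gradient h (xt ω)) + (gradient h (xt ω) - gradient ft (xt ω)))
      have n6 := norm_nonneg (x ω - xt ω)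
      nlinarith [sq_nonneg (‖gradient f (x ω) - gradient h (x ω)‖
          - ‖gradient h (x ω) - gradient h (xt ω)‖),
        sq_nonneg (‖gradient f (x ω) - gradient h (x ω)‖
          - ‖gradient h (xt ω) - gradient ft (xt ω)‖),
        sq_nonneg (‖gradient h (x ω) - gradient h (xt ω)‖
          - ‖gradient h (xt ω) - gradient ft (xt ω)‖),
        mul_le_mul_of_nonneg_left b2 n6, mul_le_mul_of_nonneg_left b2 (mul_nonneg hL.le n6)]
    have hint1 : Integrable (fun ω => ‖gradient f (x ω) - gradient ft (xt ω)‖ ^ 2) μ :=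
      hGr2.norm.integrable_sq
    have hint2 : Integrable (fun ω => 3 * L ^ 2 * ‖x ω - xt ω‖ ^ 2 + 6 * σg ^ 2) μ :=
      (hD2.norm.integrable_sq.const_mul (3 * L ^ 2)).add (integrable_const _)
    have hmono := integral_mono hint1 hint2 hptw
    have hcalc : ∫ ω, (3 * L ^ 2 * ‖x ω - xt ω‖ ^ 2 + 6 * σg ^ 2) ∂μ
        = 3 * L ^ 2 * ∫ ω, ‖x ω - xt ω‖ ^ 2 ∂μ + 6 * σg ^ 2 := by
      rw [integral_add (hD2.norm.integrable_sq.const_mul (3 * L ^ 2)) (integrable_const _),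
        integral_const_mul, integral_const]
      simp
    rwa [hcalc] at hmono
  -- Expansion of the left-hand side
  have hlhs : ∫ ω, ‖(x ω - η • g ω) - (xt ω - η • gt ω)‖ ^ 2 ∂μ
      = ∫ ω, ‖x ω - xt ω‖ ^ 2 ∂μ
        - 2 * (η * ∫ ω, (inner ℝ (x ω - xt ω) (g ω - gt ω) : ℝ) ∂μ)
        + η ^ 2 * ∫ ω, ‖g ω - gt ω‖ ^ 2 ∂μ := by
    have hv2 : MemLp (fun ω => η • (g ω - gt ω)) 2 μ := by
      have := hG2.const_smul η
      exact this
    have hfe : (fun ω => ‖(x ω - η • g ω) - (xt ω - η • gt ω)‖ ^ 2)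
        = fun ω => ‖(x ω - xt ω) - η • (g ω - gt ω)‖ ^ 2 := by
      funext ω; congr 1; rw [smul_sub]; abel_nf
    have he := aux_integral_norm_sub_sq (μ := μ) hD2 hv2
    rw [hfe, he]
    have e1 : ∫ ω, (inner ℝ (x ω - xt ω) (η • (g ω - gt ω)) : ℝ) ∂μ
        = η * ∫ ω, (inner ℝ (x ω - xt ω) (g ω - gt ω) : ℝ) ∂μ := by
      simp_rw [inner_smul_right]
      exact integral_const_mul η _
    have e2 : ∫ ω, ‖η • (g ω - gt ω)‖ ^ 2 ∂μ = η ^ 2 * ∫ ω, ‖g ω - gt ω‖ ^ 2 ∂μ := by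
      have : (fun ω => ‖η • (g ω - gt ω)‖ ^ 2) = fun ω => η ^ 2 * ‖g ω - gt ω‖ ^ 2 := by
        funext ω
        rw [norm_smul, mul_pow, Real.norm_eq_abs, sq_abs]
      rw [this]
      exact integral_const_mul _ _
    rw [e1, e2]
  -- Put everything together
  set I := ∫ ω, ‖x ω - xt ω‖ ^ 2 ∂μ with hI
  have hInonneg : 0 ≤ I := integral_nonneg fun ω => sq_nonneg _
  have hAfull : -(L * I) ≤ ∫ ω, (inner ℝ (x ω - xt ω) (g ω - gt ω) : ℝ) ∂μ := by
    rw [hA]; exact hAlow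
  have hBfull : ∫ ω, ‖g ω - gt ω‖ ^ 2 ∂μ ≤ 3 * L ^ 2 * I + 6 * σg ^ 2 + 2 * σl ^ 2 := by
    rw [hsplitG, hcross0]
    have h1 := hGrBound
    have h2 := hNbound
    linarith
  rw [hlhs]
  have hBnn : 0 ≤ ∫ ω, ‖g ω - gt ω‖ ^ 2 ∂μ := integral_nonneg fun ω => sq_nonneg _
  nlinarith [mul_nonneg hη.le (by linarith :
      (0:ℝ) ≤ (∫ ω, (inner ℝ (x ω - xt ω) (g ω - gt ω) : ℝ) ∂μ) + L * I),
    mul_nonneg (sq_nonneg η) (by linarith :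
      (0:ℝ) ≤ 3 * L ^ 2 * I + 6 * σg ^ 2 + 2 * σl ^ 2 - ∫ ω, ‖g ω - gt ω‖ ^ 2 ∂μ),
    mul_nonneg (mul_nonneg (sq_nonneg η) (sq_nonneg L)) hInonneg,
    mul_nonneg (sq_nonneg η) (sq_nonneg σl), mul_nonneg (sq_nonneg η) (sq_nonneg σg)]


/-- **One-step expansiveness of coupled SGD updates (perturbed mini-batch).**
Let `f, ft, h` be differentiable with `L`-Lipschitz gradients, with
`‖∇f(y) − ∇h(y)‖² ≤ σg²` and `‖∇ft(y) − ∇h(y)‖² ≤ σg²` for all `y`.  Let `x, xt` be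
`𝓕`-measurable square-integrable random vectors and `g, gt` square-integrable stochastic
gradients with conditional expectations `∇f(x)` resp. `∇ft(xt)` given `𝓕`, noise second
moments bounded by `σl²`, uncorrelated noises, and the exchangeability cancellation
`E⟨x − xt, ∇f(x) − ∇ft(xt)⟩ = E⟨x − xt, ∇f(x) − ∇f(xt)⟩`.  Then for every `η > 0`,
`E‖(x − ηg) − (xt − ηgt)‖² ≤ (1 + 2ηL + 6η²L²) E‖x − xt‖² + 4η²(σl² + 3σg²)`. -/
theorem sgd_one_step_expansive_perturbed
    {E : Type*} [NormedAddCommGroup E] [InnerProductSpace ℝ E] [FiniteDimensional ℝ E]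
    {Ω : Type*} [m : MeasurableSpace Ω] (μ : Measure Ω) [IsProbabilityMeasure μ]
    (𝓕 : MeasurableSpace Ω) (h𝓕 : 𝓕 ≤ m)
    (f ft h : E → ℝ) (L σl σg : ℝ) (hL : 0 < L)
    (hdf : Differentiable ℝ f) (hdft : Differentiable ℝ ft) (hdh : Differentiable ℝ h)
    (hsf : ∀ x y, ‖gradient f x - gradient f y‖ ≤ L * ‖x - y‖)
    (hsft : ∀ x y, ‖gradient ft x - gradient ft y‖ ≤ L * ‖x - y‖)
    (hsh : ∀ x y, ‖gradient h x - gradient h y‖ ≤ L * ‖x - y‖)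
    (hfh : ∀ y, ‖gradient f y - gradient h y‖ ^ 2 ≤ σg ^ 2)
    (hfth : ∀ y, ‖gradient ft y - gradient h y‖ ^ 2 ≤ σg ^ 2)
    (x xt g gt : Ω → E)
    (hx : StronglyMeasurable[𝓕] x) (hxt : StronglyMeasurable[𝓕] xt)
    (hxL2 : MemLp x 2 μ) (hxtL2 : MemLp xt 2 μ)
    (hgL2 : MemLp g 2 μ) (hgtL2 : MemLp gt 2 μ)
    (hg_unbiased : μ[g|𝓕] =ᵐ[μ] fun ω => gradient f (x ω))
    (hgt_unbiased : μ[gt|𝓕] =ᵐ[μ] fun ω => gradient ft (xt ω))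
    (hg_var : ∫ ω, ‖g ω - gradient f (x ω)‖ ^ 2 ∂μ ≤ σl ^ 2)
    (hgt_var : ∫ ω, ‖gt ω - gradient ft (xt ω)‖ ^ 2 ∂μ ≤ σl ^ 2)
    (huncorr : ∫ ω, (inner ℝ (g ω - gradient f (x ω)) (gt ω - gradient ft (xt ω)) : ℝ) ∂μ = 0)
    (hexch : ∫ ω, (inner ℝ (x ω - xt ω) (gradient f (x ω) - gradient ft (xt ω)) : ℝ) ∂μ
        = ∫ ω, (inner ℝ (x ω - xt ω) (gradient f (x ω) - gradient f (xt ω)) : ℝ) ∂μ)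
    (η : ℝ) (hη : 0 < η) :
    ∫ ω, ‖(x ω - η • g ω) - (xt ω - η • gt ω)‖ ^ 2 ∂μ ≤
      (1 + 2 * η * L + 6 * η ^ 2 * L ^ 2) * ∫ ω, ‖x ω - xt ω‖ ^ 2 ∂μ
        + 4 * η ^ 2 * (σl ^ 2 + 3 * σg ^ 2) := by
  exact sgd_aux (m := m) 𝓕 μ h𝓕 f ft h L σl σg hL hsf hsft hsh hfh hfth x xt g gt
    hx hxt hxL2 hxtL2 hgL2 hgtL2 hg_unbiased hgt_unbiased hg_var hgt_var huncorr hexch η hη
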